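/- Let G be a P5-free graph, let v ∈ V(G), let A ⊆ N_G(v), and let B ⊆ V(G) \ N_G[v]. Suppose the vertices of A are ordered v_1, …, v_s greedily so that for each j, v_{j+1} maximizes the chromatic number of its nonneighbourhood inside ⋂_{i≤j} N_G(v_i) ∩ B among all remaining vertices of A. For j ∈ [s], set E_j := (⋂_{i<j} N_G(v_i) ∩ B) \ N_G(v_j), and for each i let B_i ⊆ E_i induce a maximal-chromatic connected component of G[E_i]. Then for all i < j, the pair (B_i, B_j) is pure, i.e., B_i is complete or anticomplete to B_j and vice versa; in fact B_j is pure to B_i and B_i is pure to B_j. -/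

import Mathlib

open SimpleGraph

/-- The chromatic number of the subgraph of `G` induced on `S`, as a natural number. -/
noncomputable def chiS {V : Type*} [Fintype V] (G : SimpleGraph V) (S : Set V) : ℕ :=
  (G.induce S).chromaticNumber.toNat

/-- A graph is `P5`-free if it has no induced subgraph isomorphic to the five-vertex path. -/
def P5Free {V : Type*} (G : SimpleGraph V) : Prop :=
  IsEmpty (SimpleGraph.pathGraph 5 ↪g G)

lemma cross_walk {α : Type*} {H : SimpleGraph α} (p : α → Prop)
    {u w : α} (q : H.Walk u w) (hu : p u) (hw : ¬ p w) :
    ∃ x y, H.Adj x y ∧ p x ∧ ¬ p y := by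
  induction q with
  | nil => exact absurd hu hw
  | @cons u u' w h q ih =>
    by_cases hp : p u'
    · exact ih hp hw
    · exact ⟨u, u', h, hu, hp⟩

lemma buildP5 {V : Type*} {G : SimpleGraph V} (a b c d e : V)
    (hab : G.Adj a b) (hbc : G.Adj b c) (hcd : G.Adj c d) (hde : G.Adj d e)
    (hac : ¬ G.Adj a c) (had : ¬ G.Adj a d) (hae : ¬ G.Adj a e)
    (hbd : ¬ G.Adj b d) (hbe : ¬ G.Adj b e) (hce : ¬ G.Adj c e)
    (nac : a ≠ c) (nad : a ≠ d) (nae : a ≠ e) (nbd : b ≠ d) (nbe : b ≠ e)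
    (nce : c ≠ e) : Nonempty (SimpleGraph.pathGraph 5 ↪g G) := by
  have hca : ¬ G.Adj c a := fun h => hac h.symm
  have hda : ¬ G.Adj d a := fun h => had h.symm
  have hea : ¬ G.Adj e a := fun h => hae h.symm
  have hdb : ¬ G.Adj d b := fun h => hbd h.symm
  have heb : ¬ G.Adj e b := fun h => hbe h.symm
  have hec : ¬ G.Adj e c := fun h => hce h.symm
  have nab : a ≠ b := hab.ne
  have nbc : b ≠ c := hbc.ne
  have ncd : c ≠ d := hcd.ne
  have nde : d ≠ e := hde.ne
  refine ⟨⟨⟨![a, b, c, d, e], ?_⟩, ?_⟩⟩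
  · intro x y hxy
    fin_cases x <;> fin_cases y <;>
      simp_all [nab, nbc, ncd, nde, nab.symm, nbc.symm, ncd.symm, nde.symm,
        nac, nad, nae, nbd, nbe, nce,
        nac.symm, nad.symm, nae.symm, nbd.symm, nbe.symm, nce.symm]
  · intro x y
    fin_cases x <;> fin_cases y <;>
      simp_all [pathGraph_adj, hab, hbc, hcd, hde, hab.symm, hbc.symm, hcd.symm,
        hde.symm, G.irrefl, hac, had, hae, hbd, hbe, hce, hca, hda, hea, hdb, heb, hec] <;>
      (first | assumption | exact G.adj_symm (by assumption))

lemma chiS_mono {V : Type*} [Fintype V] (G : SimpleGraph V) {S T : Set V}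
    (h : S ⊆ T) : chiS G S ≤ chiS G T := by
  classical
  unfold chiS
  have hc : (G.induce T).Colorable ((G.induce T).chromaticNumber.toNat) :=
    colorable_chromaticNumber_of_fintype _
  have hc' : (G.induce S).Colorable ((G.induce T).chromaticNumber.toNat) :=
    hc.of_hom (G.induceHomOfLE h).toHom
  have := hc'.chromaticNumber_le
  exact_mod_cast ENat.toNat_le_toNat this (by simp)

lemma chiS_insert_complete {V : Type*} [Fintype V] (G : SimpleGraph V) {S : Set V}
    {b : V} (hb : b ∉ S) (hcomp : ∀ x ∈ S, G.Adj b x) :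
    chiS G S + 1 ≤ chiS G (insert b S) := by
  classical
  set n := chiS G (insert b S) with hn
  have hc : (G.induce (insert b S)).Colorable n :=
    colorable_chromaticNumber_of_fintype _
  obtain ⟨c⟩ := hc
  have hbmem : b ∈ insert b S := Set.mem_insert _ _
  have hnpos : 1 ≤ n := by
    rcases Nat.eq_zero_or_pos n with h0 | h
    · exfalso; have := (c ⟨b, hbmem⟩).isLt; omega
    · exact h
  -- coloring of S avoiding the color of b
  let cb : Fin n := c ⟨b, hbmem⟩
  have hcol : (G.induce S).Colorable (Fintype.card {k : Fin n // k ≠ cb}) := by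
    have C : (G.induce S).Coloring {k : Fin n // k ≠ cb} := by
      refine SimpleGraph.Coloring.mk
        (fun x => ⟨c ⟨x.1, Set.mem_insert_of_mem _ x.2⟩, fun hEq => ?_⟩) ?_
      · exact c.valid (by exact (hcomp x.1 x.2).symm :
          (G.induce (insert b S)).Adj ⟨x.1, _⟩ ⟨b, hbmem⟩) (by simpa using hEq)
      · intro x y hxy hEq
        exact c.valid (by exact hxy : (G.induce (insert b S)).Adj ⟨x.1, _⟩ ⟨y.1, _⟩)
          (by simpa using congrArg Subtype.val hEq)
    exact C.colorable
  have hcard : Fintype.card {k : Fin n // k ≠ cb} = n - 1 := by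
    rw [Fintype.card_subtype_compl, Fintype.card_fin]
    simp
  rw [hcard] at hcol
  have := ENat.toNat_le_toNat hcol.chromaticNumber_le (by simp)
  have hS : chiS G S ≤ n - 1 := by rw [ENat.toNat_coe] at this; simpa [chiS] using this
  omega

theorem stmt_8 {V : Type*} [Fintype V] (G : SimpleGraph V) (hP5 : P5Free G)
    (v : V) (A B : Set V)
    (hA : A ⊆ G.neighborSet v) (hB : B ⊆ (insert v (G.neighborSet v))ᶜ)
    (s : ℕ) (vs : Fin s → V) (hinj : Function.Injective vs)
    (hrange : Set.range vs = A)
    -- greedy choice: `vs j` maximizes the chromatic number of its nonneighbourhood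
    -- inside `⋂_{i<j} N(vs i) ∩ B` among all remaining vertices of `A`
    (hgreedy : ∀ j : Fin s, ∀ u ∈ A, (∀ i : Fin s, i < j → u ≠ vs i) →
      chiS G (((⋂ i : {i : Fin s // i < j}, G.neighborSet (vs i.1)) ∩ B) \ G.neighborSet u)
        ≤ chiS G (((⋂ i : {i : Fin s // i < j}, G.neighborSet (vs i.1)) ∩ B) \
            G.neighborSet (vs j)))
    (E : Fin s → Set V)
    (hE : ∀ j : Fin s,
      E j = ((⋂ i : {i : Fin s // i < j}, G.neighborSet (vs i.1)) ∩ B) \ G.neighborSet (vs j))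
    (Bs : Fin s → Set V)
    (hBsub : ∀ i, Bs i ⊆ E i)
    (hBconn : ∀ i, (G.induce (Bs i)).Connected)
    (hBcomp : ∀ i, ∀ a ∈ Bs i, ∀ b ∈ E i \ Bs i, ¬ G.Adj a b)
    (hBmax : ∀ i, chiS G (Bs i) = chiS G (E i)) :
    ∀ i j : Fin s, i < j →
      (∀ b ∈ Bs j, (∀ a ∈ Bs i, G.Adj b a) ∨ (∀ a ∈ Bs i, ¬ G.Adj b a)) ∧
      (∀ a ∈ Bs i, (∀ b ∈ Bs j, G.Adj a b) ∨ (∀ b ∈ Bs j, ¬ G.Adj a b)) := by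
  classical
  intro i j hij
  -- basic membership facts
  have hBv : ∀ x ∈ B, x ≠ v ∧ ¬ G.Adj v x := by
    intro x hx
    have := hB hx
    simp only [Set.mem_compl_iff, Set.mem_insert_iff, mem_neighborSet] at this
    push_neg at this
    exact this
  have hEB : ∀ k, E k ⊆ B := by
    intro k x hx; rw [hE k] at hx; exact hx.1.2
  have hEnadj : ∀ k, ∀ x ∈ E k, ¬ G.Adj (vs k) x := by
    intro k x hx; rw [hE k] at hx; exact hx.2
  have hEjNi : ∀ x ∈ E j, G.Adj (vs i) x := by
    intro x hx; rw [hE j] at hx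
    have := hx.1.1
    exact Set.mem_iInter.mp this ⟨i, hij⟩
  have hBiB : ∀ x ∈ Bs i, x ∈ B := fun x hx => hEB i (hBsub i hx)
  have hBjB : ∀ x ∈ Bs j, x ∈ B := fun x hx => hEB j (hBsub j hx)
  have hBiNi : ∀ x ∈ Bs i, ¬ G.Adj (vs i) x := fun x hx => hEnadj i x (hBsub i hx)
  have hBjNi : ∀ x ∈ Bs j, G.Adj (vs i) x := fun x hx => hEjNi x (hBsub j hx)
  have hBjNj : ∀ x ∈ Bs j, ¬ G.Adj (vs j) x := fun x hx => hEnadj j x (hBsub j hx)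
  have hviA : vs i ∈ A := hrange ▸ Set.mem_range_self i
  have hvjA : vs j ∈ A := hrange ▸ Set.mem_range_self j
  have hvvi : G.Adj v (vs i) := hA hviA
  have hvvj : G.Adj v (vs j) := hA hvjA
  -- distinctness helpers
  have hne_Bv : ∀ x ∈ B, x ≠ v := fun x hx => (hBv x hx).1
  have hne_Bvi : ∀ x ∈ B, x ≠ vs i := by
    intro x hx h; exact (hBv x hx).2 (h ▸ hvvi)
  have hne_Bvj : ∀ x ∈ B, x ≠ vs j := by
    intro x hx h; exact (hBv x hx).2 (h ▸ hvvj)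
  have hnadj_Bv : ∀ x ∈ B, ¬ G.Adj x v := fun x hx h => (hBv x hx).2 h.symm
  -- Part 1: every b ∈ Bs j is pure to Bs i
  have part1 : ∀ b ∈ Bs j, (∀ a ∈ Bs i, G.Adj b a) ∨ (∀ a ∈ Bs i, ¬ G.Adj b a) := by
    intro b hb
    by_contra hcon
    push_neg at hcon
    obtain ⟨⟨a₀, ha₀, hna₀⟩, a₁, ha₁, hadj₁⟩ := hcon
    obtain ⟨q⟩ := ((hBconn i) ⟨a₁, ha₁⟩ ⟨a₀, ha₀⟩)
    obtain ⟨x, y, hxy, hbx, hnby⟩ :=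
      cross_walk (fun z : Bs i => G.Adj b z.1) q hadj₁ hna₀
    have hxyG : G.Adj x.1 y.1 := hxy
    -- P5 : y - x - b - vs i - v
    have : Nonempty (SimpleGraph.pathGraph 5 ↪g G) := by
      refine buildP5 y.1 x.1 b (vs i) v hxyG.symm hbx.symm (hBjNi b hb).symm hvvi.symm
        (fun h => hnby h.symm)
        (fun h => hBiNi y.1 y.2 h.symm) (hnadj_Bv y.1 (hBiB y.1 y.2))
        (fun h => hBiNi x.1 x.2 h.symm) (hnadj_Bv x.1 (hBiB x.1 x.2))
        (hnadj_Bv b (hBjB b hb))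
        ?_ ?_ ?_ ?_ ?_ ?_
      · intro h; exact hBiNi y.1 y.2 (by rw [h]; exact hBjNi b hb)
      · exact hne_Bvi y.1 (hBiB y.1 y.2)
      · exact hne_Bv y.1 (hBiB y.1 y.2)
      · exact hne_Bvi x.1 (hBiB x.1 x.2)
      · exact hne_Bv x.1 (hBiB x.1 x.2)
      · exact hne_Bv b (hBjB b hb)
    exact hP5.false this.some
  refine ⟨part1, ?_⟩
  -- Part 2
  intro a ha
  by_contra hcon
  push_neg at hcon
  obtain ⟨⟨b₀, hb₀, hnb₀⟩, b₁, hb₁, hadj₁⟩ := hcon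
  obtain ⟨q⟩ := ((hBconn j) ⟨b₁, hb₁⟩ ⟨b₀, hb₀⟩)
  obtain ⟨b, b', hbb', hab, hnab'⟩ :=
    cross_walk (fun z : Bs j => G.Adj a z.1) q hadj₁ hnb₀
  have hbb'G : G.Adj b.1 b'.1 := hbb'
  -- b is complete to Bs i, b' anticomplete
  have hbcomp : ∀ x ∈ Bs i, G.Adj b.1 x := by
    rcases part1 b.1 b.2 with h | h
    · exact h
    · exact absurd hab.symm (h a ha)
  have hb'anti : ∀ x ∈ Bs i, ¬ G.Adj b'.1 x := by
    rcases part1 b'.1 b'.2 with h | h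
    · exact absurd (h a ha).symm hnab'
    · exact h
  -- no vertex of Bs i is adjacent to vs j
  have hnoadj : ∀ x ∈ Bs i, ¬ G.Adj (vs j) x := by
    intro x hx hadj
    -- P5 : b' - b - x - vs j - v
    have : Nonempty (SimpleGraph.pathGraph 5 ↪g G) := by
      refine buildP5 b'.1 b.1 x (vs j) v hbb'G.symm (hbcomp x hx) hadj.symm hvvj.symm
        (fun h => hb'anti x hx h)
        (fun h => hBjNj b'.1 b'.2 h.symm) (hnadj_Bv b'.1 (hBjB b'.1 b'.2))
        (fun h => hBjNj b.1 b.2 h.symm) (hnadj_Bv b.1 (hBjB b.1 b.2))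
        (hnadj_Bv x (hBiB x hx))
        ?_ ?_ ?_ ?_ ?_ ?_
      · intro h
        exact (hBiNi x hx) (h ▸ hBjNi b'.1 b'.2)
      · exact hne_Bvj b'.1 (hBjB b'.1 b'.2)
      · exact hne_Bv b'.1 (hBjB b'.1 b'.2)
      · exact hne_Bvj b.1 (hBjB b.1 b.2)
      · exact hne_Bv b.1 (hBjB b.1 b.2)
      · exact hne_Bv x (hBiB x hx)
    exact hP5.false this.some
  -- greedy inequality with u = vs j at step i
  set F : Set V :=
    ((⋂ k : {k : Fin s // k < i}, G.neighborSet (vs k.1)) ∩ B) \ G.neighborSet (vs j) with hF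
  have hgr : chiS G F ≤ chiS G (E i) := by
    have := hgreedy i (vs j) hvjA (by
      intro k hk h
      have hjk := hinj h
      rw [← hjk] at hk
      exact absurd (lt_trans hk hij) (lt_irrefl _))
    rw [← hE i] at this
    exact this
  -- insert b (Bs i) ⊆ F
  have hbF : b.1 ∈ F := by
    constructor
    · constructor
      · apply Set.mem_iInter.mpr
        intro k
        have hbEj := hBsub j b.2
        rw [hE j] at hbEj
        exact Set.mem_iInter.mp hbEj.1.1 ⟨k.1, lt_trans k.2 hij⟩
      · exact hBjB b.1 b.2
    · intro h
      exact hBjNj b.1 b.2 h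
  have hBiF : Bs i ⊆ F := by
    intro x hx
    have hxEi := hBsub i hx
    rw [hE i] at hxEi
    exact ⟨hxEi.1, fun h => hnoadj x hx h⟩
  have hsub : insert b.1 (Bs i) ⊆ F := Set.insert_subset hbF hBiF
  have hbnotin : b.1 ∉ Bs i := fun h => hBiNi b.1 h (hBjNi b.1 b.2)
  have h1 : chiS G (Bs i) + 1 ≤ chiS G (insert b.1 (Bs i)) :=
    chiS_insert_complete G hbnotin hbcomp
  have h2 : chiS G (insert b.1 (Bs i)) ≤ chiS G F := chiS_mono G hsub
  have h3 := hBmax i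
  omega
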